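/- Let K be a finite-dimensional complex Hilbert space, |ψ⟩ ∈ K a unit vector, and let n, r be integers with 0 ≤ r ≤ n. If ρ_n ∈ D(K^{⊗n}) has its support contained in span V^n_r(K, |ψ⟩), then the sum of the single-site fidelities satisfies Σ_{i=1}^n ⟨ψ| (ρ_n)_{{i}} |ψ⟩ ≥ n − r, where (ρ_n)_{{i}} is the reduced state of ρ_n on the i-th tensor factor. -/

import Mathlib

open scoped BigOperators ComplexOrder
open Filter Matrix

noncomputable section

namespace AlmostIID

/-- The trace norm `‖A‖₁ = Tr √(A†A)` of a square complex matrix. -/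
def traceNorm {m : Type*} [Fintype m] [DecidableEq m] (A : Matrix m m ℂ) : ℝ :=
  ((((Matrix.posSemidef_conjTranspose_mul_self A).isHermitian.eigenvectorUnitary : Matrix m m ℂ) *
    Matrix.diagonal (((↑) : ℝ → ℂ) ∘ Real.sqrt ∘
      (Matrix.posSemidef_conjTranspose_mul_self A).isHermitian.eigenvalues) *
    (star (Matrix.posSemidef_conjTranspose_mul_self A).isHermitian.eigenvectorUnitary :
      Matrix m m ℂ)).trace).re

/-- A density matrix (state): positive semidefinite with unit trace. -/
def IsState {m : Type*} [Fintype m] (M : Matrix m m ℂ) : Prop :=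
  M.PosSemidef ∧ M.trace = 1

/-- The marginal (reduced density matrix) of an `n`-partite operator on the
coordinates in `I`, i.e. the partial trace over the complement of `I`. -/
def marginal {κ : Type*} [Fintype κ] {n : ℕ}
    (M : Matrix (Fin n → κ) (Fin n → κ) ℂ) (I : Finset (Fin n)) :
    Matrix ({i : Fin n // i ∈ I} → κ) ({i : Fin n // i ∈ I} → κ) ℂ :=
  fun a b => ∑ f : {i : Fin n // i ∉ I} → κ,
    M (fun i => if h : i ∈ I then a ⟨i, h⟩ else f ⟨i, h⟩)
      (fun i => if h : i ∈ I then b ⟨i, h⟩ else f ⟨i, h⟩)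

/-- The single-site reduced density matrix on the `i`-th tensor factor. -/
def siteMarginal {κ : Type*} [Fintype κ] {n : ℕ}
    (M : Matrix (Fin n → κ) (Fin n → κ) ℂ) (i : Fin n) : Matrix κ κ ℂ :=
  fun a b => ∑ f : {j : Fin n // j ≠ i} → κ,
    M (fun j => if h : j = i then a else f ⟨j, h⟩)
      (fun j => if h : j = i then b else f ⟨j, h⟩)

/-- The i.i.d. product state `ρ^{⊗ι}` on the tensor factors indexed by `ι`. -/
def iidOn {κ : Type*} (ι : Type*) [Fintype ι] (ρ : Matrix κ κ ℂ) :
    Matrix (ι → κ) (ι → κ) ℂ :=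
  fun a b => ∏ i, ρ (a i) (b i)

/-- The product state `φ 0 ⊗ φ 1 ⊗ ⋯`. -/
def prodState {κ : Type*} {ι : Type*} [Fintype ι] (φ : ι → Matrix κ κ ℂ) :
    Matrix (ι → κ) (ι → κ) ℂ :=
  fun a b => ∏ i, φ i (a i) (b i)

/-- The quantum Wasserstein norm of order 1 of a difference of states:
the minimum of `Σ cᵢ` over decompositions `X = Σ cᵢ (τ⁽ⁱ⁾ − η⁽ⁱ⁾)` with `cᵢ ≥ 0`,
`τ⁽ⁱ⁾, η⁽ⁱ⁾` states with equal partial traces over the `i`-th factor. -/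
def W1 {κ : Type*} [Fintype κ] [DecidableEq κ] {n : ℕ}
    (X : Matrix (Fin n → κ) (Fin n → κ) ℂ) : ℝ :=
  sInf { w : ℝ |
    ∃ (c : Fin n → ℝ) (τ η : Fin n → Matrix (Fin n → κ) (Fin n → κ) ℂ),
      (∀ i, 0 ≤ c i) ∧ (∀ i, IsState (τ i)) ∧ (∀ i, IsState (η i)) ∧
      (∀ i, marginal (τ i) ({i}ᶜ : Finset (Fin n)) = marginal (η i) ({i}ᶜ : Finset (Fin n))) ∧
      X = ∑ i, c i • (τ i - η i) ∧ w = ∑ i, c i }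

/-- The local variation norm. -/
def LV {κ : Type*} [Fintype κ] [DecidableEq κ] {n : ℕ}
    (X : Matrix (Fin n → κ) (Fin n → κ) ℂ) : ℝ :=
  (1/2) * ∑ k ∈ Finset.Icc 1 n, ((2:ℝ)^k)⁻¹ *
    (((n.choose k : ℝ))⁻¹ *
      ∑ I ∈ Finset.powersetCard k (Finset.univ : Finset (Fin n)),
        traceNorm (marginal X I))


/-- The action of the permutation unitary `U_π` on a vector of `K^{⊗n}`. -/
def permVec {κ : Type*} {n : ℕ} (π : Equiv.Perm (Fin n)) (v : (Fin n → κ) → ℂ) :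
    (Fin n → κ) → ℂ :=
  fun x => v (fun i => x (π i))

/-- The vector `|ψ⟩^{⊗(n−r)} ⊗ |ω⟩` in `K^{⊗n}`. -/
def baseVec {κ : Type*} [Fintype κ] (n r : ℕ) (hrn : r ≤ n)
    (ψ : κ → ℂ) (ω : (Fin r → κ) → ℂ) : (Fin n → κ) → ℂ :=
  fun x => (∏ i : Fin (n - r), ψ (x (Fin.castLE (Nat.sub_le n r) i))) *
    ω (fun j => x ⟨n - r + j.val, by have := j.isLt; omega⟩)

/-- The set `V^n_r(K, |ψ⟩) = {U_π(|ψ⟩^{⊗(n−r)} ⊗ |ω⟩) : π ∈ S_n, |ω⟩ a unit vector of K^{⊗r}}`. -/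
def Vset {κ : Type*} [Fintype κ] (n r : ℕ) (hrn : r ≤ n) (ψ : κ → ℂ) :
    Set ((Fin n → κ) → ℂ) :=
  { v | ∃ (π : Equiv.Perm (Fin n)) (ω : (Fin r → κ) → ℂ),
      (∑ y, Complex.normSq (ω y)) = 1 ∧ v = permVec π (baseVec n r hrn ψ ω) }

variable {D n : ℕ}

def insF (i : Fin n) (a : Fin D) (f : {j : Fin n // j ≠ i} → Fin D) : Fin n → Fin D :=
  fun j => if h : j = i then a else f ⟨j, h⟩

def insEquiv (i : Fin n) : (Fin D) × ({j : Fin n // j ≠ i} → Fin D) ≃ (Fin n → Fin D) where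
  toFun p := insF i p.1 p.2
  invFun x := (x i, fun j => x j.1)
  left_inv p := by
    ext j
    · simp [insF]
    · simp [insF, j.2]
  right_inv x := by
    funext j
    by_cases h : j = i <;> simp [insF, h]

@[simp] lemma insF_apply_self (i : Fin n) (a : Fin D) (f : {j : Fin n // j ≠ i} → Fin D) :
    insF i a f i = a := by simp [insF]

lemma insF_apply_ne (i : Fin n) (a : Fin D) (f : {j : Fin n // j ≠ i} → Fin D)
    {j : Fin n} (h : j ≠ i) : insF i a f j = f ⟨j, h⟩ := by simp [insF, h]

def Fsite (ψ : Fin D → ℂ) (i : Fin n) (v : (Fin n → Fin D) → ℂ) : ℝ :=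
  ∑ f : {j : Fin n // j ≠ i} → Fin D,
    Complex.normSq (∑ b, (starRingEnd ℂ) (ψ b) * v (insF i b f))

lemma sum_fun_prod {ι : Type*} [Fintype ι] [DecidableEq ι] (g : ι → Fin D → ℂ) :
    ∑ y : ι → Fin D, ∏ j, g j (y j) = ∏ j, ∑ b, g j b := by
  rw [← Fintype.piFinset_univ]
  exact (Finset.prod_univ_sum _ _).symm

lemma prod_delta {ι : Type*} [Fintype ι] {β : Type*} [DecidableEq β] (y y' : ι → β) :
    (∏ j, if y j = y' j then (1 : ℂ) else 0) = if y = y' then 1 else 0 := by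
  by_cases h : y = y'
  · simp [h]
  · rw [if_neg h]
    obtain ⟨j, hj⟩ := Function.ne_iff.mp h
    exact Finset.prod_eq_zero (Finset.mem_univ j) (if_neg hj)

lemma prod_split {M : Type*} [CommMonoid M] {ι : Type*} [Fintype ι] [DecidableEq ι]
    (i : ι) (h : ι → M) :
    ∏ j, h j = h i * ∏ j : {j : ι // j ≠ i}, h j.1 := by
  rw [Fintype.prod_eq_mul_prod_compl i]
  congr 1
  exact (Finset.prod_subtype ({i}ᶜ) (by simp) h)

/-- The product unitary `u^{⊗ n}`. -/
def Tmat (u : Matrix (Fin D) (Fin D) ℂ) : Matrix (Fin n → Fin D) (Fin n → Fin D) ℂ :=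
  Matrix.of fun x y => ∏ j, u (x j) (y j)

variable {u : Matrix (Fin D) (Fin D) ℂ}

lemma Tmat_star_mul (huu : star u * u = 1) :
    star (Tmat u (n := n)) * Tmat u = 1 := by
  ext y y'
  rw [Matrix.mul_apply]
  calc ∑ x, (star (Tmat u (n := n))) y x * Tmat u x y'
      = ∑ x : Fin n → Fin D, ∏ j, ((starRingEnd ℂ) (u (x j) (y j)) * u (x j) (y' j)) := by
        refine Finset.sum_congr rfl fun x _ => ?_
        rw [Matrix.star_apply, RCLike.star_def, Tmat, Matrix.of_apply, Matrix.of_apply,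
          map_prod, ← Finset.prod_mul_distrib]
    _ = ∏ j, ∑ b, ((starRingEnd ℂ) (u b (y j)) * u b (y' j)) :=
        sum_fun_prod (fun j b => (starRingEnd ℂ) (u b (y j)) * u b (y' j))
    _ = ∏ j, (if y j = y' j then (1:ℂ) else 0) := by
        refine Finset.prod_congr rfl fun j _ => ?_
        have : (star u * u) (y j) (y' j) = (1 : Matrix (Fin D) (Fin D) ℂ) (y j) (y' j) := by
          rw [huu]
        rw [Matrix.mul_apply] at this
        simpa [Matrix.one_apply] using this
    _ = (1 : Matrix (Fin n → Fin D) (Fin n → Fin D) ℂ) y y' := by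
        rw [prod_delta, Matrix.one_apply]

lemma Tmat_mul_star (huu : star u * u = 1) :
    Tmat u (n := n) * star (Tmat u) = 1 :=
  mul_eq_one_comm.mp (Tmat_star_mul huu)

lemma prod_ite_extract {ι : Type*} [Fintype ι] [DecidableEq ι] (i : ι) (C : ℂ) (g : ι → ℂ) :
    (∏ j, if j = i then C else g j) = C * ∏ j, (if j = i then 1 else g j) := by
  rw [prod_split i (fun j => if j = i then C else g j),
    prod_split i (fun j => if j = i then (1:ℂ) else g j), if_pos rfl, if_pos rfl, one_mul]
  congr 1
  exact Finset.prod_congr rfl fun j _ => by rw [if_neg j.2, if_neg j.2]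

lemma row_orth (huu' : u * star u = 1) (a a' : Fin D) :
    ∑ b, u a b * (starRingEnd ℂ) (u a' b) = if a = a' then 1 else 0 := by
  have h2 : (u * star u) a a' = (1 : Matrix (Fin D) (Fin D) ℂ) a a' := by rw [huu']
  rw [Matrix.mul_apply] at h2
  simp only [Matrix.star_apply, RCLike.star_def] at h2
  rw [h2, Matrix.one_apply]

/-- The diagonal projector counting site `i` in state `i0`. -/
def Dmat (i0 : Fin D) (i : Fin n) : Matrix (Fin n → Fin D) (Fin n → Fin D) ℂ :=
  Matrix.diagonal (fun z => if z i = i0 then 1 else 0)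

lemma Dmat_mul_diagonal (i0 : Fin D) (i : Fin n) (M : Matrix (Fin n → Fin D) (Fin n → Fin D) ℂ)
    (x y : Fin n → Fin D) :
    (M * Dmat i0 i) x y = M x y * (if y i = i0 then 1 else 0) := by
  rw [Dmat, Matrix.mul_diagonal]

/-- The one-site fidelity observable. -/
def Amat (ψ : Fin D → ℂ) (i : Fin n) : Matrix (Fin n → Fin D) (Fin n → Fin D) ℂ :=
  Matrix.of fun x x' => ψ (x i) * (starRingEnd ℂ) (ψ (x' i)) *
    ∏ j, (if j = i then 1 else if x j = x' j then 1 else 0)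

set_option maxHeartbeats 1000000 in
lemma Amat_conj (huu : star u * u = 1) (i0 : Fin D) (ψ : Fin D → ℂ)
    (hcol : ∀ a, u a i0 = ψ a) (i : Fin n) :
    Amat ψ i = Tmat u * Dmat i0 i * star (Tmat u) := by
  have huu' : u * star u = 1 := mul_eq_one_comm.mp huu
  ext x x'
  rw [Matrix.mul_apply]
  symm
  calc ∑ y, (Tmat u * Dmat i0 i : Matrix (Fin n → Fin D) (Fin n → Fin D) ℂ) x y
        * (star (Tmat u)) y x'
      = ∑ y : Fin n → Fin D, ∏ j,
          (u (x j) (y j) * (starRingEnd ℂ) (u (x' j) (y j))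
            * (if j = i then (if y j = i0 then 1 else 0) else 1)) := by
        refine Finset.sum_congr rfl fun y _ => ?_
        rw [Dmat_mul_diagonal, Matrix.star_apply, RCLike.star_def, Tmat, Matrix.of_apply,
          Matrix.of_apply, map_prod]
        rw [Finset.prod_mul_distrib, Finset.prod_mul_distrib]
        rw [show (∏ j, if j = i then (if y j = i0 then (1:ℂ) else 0) else 1)
              = (if y i = i0 then (1:ℂ) else 0) from
            (Finset.prod_ite_eq' Finset.univ i
              (fun j => if y j = i0 then (1:ℂ) else 0)).trans (if_pos (Finset.mem_univ i))]
        ring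
    _ = ∏ j, ∑ b, (u (x j) b * (starRingEnd ℂ) (u (x' j) b)
            * (if j = i then (if b = i0 then 1 else 0) else 1)) :=
        sum_fun_prod (fun j b => u (x j) b * (starRingEnd ℂ) (u (x' j) b)
            * (if j = i then (if b = i0 then 1 else 0) else 1))
    _ = ∏ j, (if j = i then ψ (x i) * (starRingEnd ℂ) (ψ (x' i))
            else if x j = x' j then 1 else 0) := by
        refine Finset.prod_congr rfl fun j _ => ?_
        by_cases hj : j = i
        · subst hj
          simp only [if_pos rfl, mul_ite, mul_one, mul_zero]
          simp only [Finset.sum_ite_eq', Finset.mem_univ, if_true]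
          rw [hcol, hcol]
        · simp only [if_neg hj, mul_one]
          exact row_orth huu' (x j) (x' j)
    _ = Amat ψ i x x' := by
        rw [Amat, Matrix.of_apply,
          prod_ite_extract i (ψ (x i) * (starRingEnd ℂ) (ψ (x' i)))
            (fun j => if x j = x' j then (1:ℂ) else 0)]

lemma restr_insF (i : Fin n) (a : Fin D) (f : {j : Fin n // j ≠ i} → Fin D) :
    (fun j : {j : Fin n // j ≠ i} => insF i a f j.1) = f := by
  funext j
  exact insF_apply_ne i a f j.2

lemma delta_restrict (i : Fin n) (x : Fin n → Fin D) (b : Fin D)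
    (f : {j : Fin n // j ≠ i} → Fin D) :
    (∏ j, if j = i then (1:ℂ) else if x j = insF i b f j then 1 else 0)
      = if (fun j : {j : Fin n // j ≠ i} => x j.1) = f then 1 else 0 := by
  by_cases h : (fun j : {j : Fin n // j ≠ i} => x j.1) = f
  · rw [if_pos h]
    apply Finset.prod_eq_one
    intro j _
    by_cases hj : j = i
    · rw [if_pos hj]
    · rw [if_neg hj, insF_apply_ne i b f hj, ← h, if_pos rfl]
  · rw [if_neg h]
    obtain ⟨j, hj⟩ := Function.ne_iff.mp h
    refine Finset.prod_eq_zero (Finset.mem_univ j.1) ?_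
    rw [if_neg j.2, insF_apply_ne i b f j.2, if_neg]
    exact fun hc => hj (hc.trans (congrArg f (Subtype.ext rfl)))

lemma dot_star_self {ι : Type*} [Fintype ι] (w : ι → ℂ) :
    dotProduct (star w) w = ((∑ x, Complex.normSq (w x) : ℝ) : ℂ) := by
  push_cast
  refine Finset.sum_congr rfl fun x _ => ?_
  rw [Pi.star_apply, RCLike.star_def, Complex.normSq_eq_conj_mul_self]

lemma Fsite_quadform (ψ : Fin D → ℂ) (i : Fin n) (v : (Fin n → Fin D) → ℂ) :
    ((Fsite ψ i v : ℝ) : ℂ) = dotProduct (star v) ((Amat ψ i).mulVec v) := by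
  have hrow : ∀ x : Fin n → Fin D,
      ((Amat ψ i).mulVec v) x = ψ (x i) *
        ∑ b, (starRingEnd ℂ) (ψ b) * v (insF i b (fun j => x j.1)) := by
    intro x
    rw [Matrix.mulVec, dotProduct]
    rw [← Equiv.sum_comp (insEquiv i) (fun x' => Amat ψ i x x' * v x')]
    rw [Fintype.sum_prod_type]
    rw [Finset.mul_sum]
    refine Finset.sum_congr rfl fun b _ => ?_
    have hinner : ∀ f : {j : Fin n // j ≠ i} → Fin D,
        Amat ψ i x (insEquiv i (b, f)) * v (insEquiv i (b, f))
          = if (fun j : {j : Fin n // j ≠ i} => x j.1) = f then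
              (ψ (x i) * ((starRingEnd ℂ) (ψ b) * v (insF i b f))) else 0 := by
      intro f
      show Amat ψ i x (insF i b f) * v (insF i b f) = _
      rw [Amat, Matrix.of_apply, insF_apply_self, delta_restrict]
      by_cases h : (fun j : {j : Fin n // j ≠ i} => x j.1) = f
      · rw [if_pos h, if_pos h]
        ring
      · rw [if_neg h, if_neg h, mul_zero, zero_mul]
    rw [Finset.sum_congr rfl fun f _ => hinner f, Finset.sum_ite_eq Finset.univ _
      (fun f => ψ (x i) * ((starRingEnd ℂ) (ψ b) * v (insF i b f))), if_pos (Finset.mem_univ _)]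
  calc ((Fsite ψ i v : ℝ) : ℂ)
      = ∑ f : {j : Fin n // j ≠ i} → Fin D,
          ((Complex.normSq (∑ b, (starRingEnd ℂ) (ψ b) * v (insF i b f)) : ℝ) : ℂ) := by
        rw [Fsite]
        push_cast
        rfl
    _ = ∑ f : {j : Fin n // j ≠ i} → Fin D, ∑ a,
          (starRingEnd ℂ) (v (insF i a f)) *
            (ψ a * ∑ b, (starRingEnd ℂ) (ψ b) * v (insF i b f)) := by
        refine Finset.sum_congr rfl fun f _ => ?_
        rw [Complex.normSq_eq_conj_mul_self, map_sum, Finset.sum_mul]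
        refine Finset.sum_congr rfl fun a _ => ?_
        rw [_root_.map_mul, Complex.conj_conj]
        ring
    _ = ∑ a, ∑ f : {j : Fin n // j ≠ i} → Fin D,
          (starRingEnd ℂ) (v (insF i a f)) *
            (ψ a * ∑ b, (starRingEnd ℂ) (ψ b) * v (insF i b f)) := Finset.sum_comm
    _ = dotProduct (star v) ((Amat ψ i).mulVec v) := by
        rw [dotProduct, ← Equiv.sum_comp (insEquiv i)
          (fun x => (star v) x * ((Amat ψ i).mulVec v) x), Fintype.sum_prod_type]
        refine Finset.sum_congr rfl fun a _ => Finset.sum_congr rfl fun f _ => ?_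
        show _ = (star v) (insF i a f) * ((Amat ψ i).mulVec v) (insF i a f)
        rw [hrow, Pi.star_apply, RCLike.star_def, insF_apply_self, restr_insF]

lemma parseval (huu : star u * u = 1) (v : (Fin n → Fin D) → ℂ) :
    ∑ x, Complex.normSq (v x) = ∑ y, Complex.normSq ((star (Tmat u) *ᵥ v) y) := by
  have h : ((∑ y, Complex.normSq ((star (Tmat u (n := n)) *ᵥ v) y) : ℝ) : ℂ)
      = ((∑ x, Complex.normSq (v x) : ℝ) : ℂ) := by
    rw [← dot_star_self, ← dot_star_self]
    rw [Matrix.star_mulVec, dotProduct_mulVec, Matrix.vecMul_vecMul]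
    rw [Matrix.star_eq_conjTranspose, Matrix.conjTranspose_conjTranspose,
      ← Matrix.star_eq_conjTranspose, Tmat_mul_star huu, Matrix.vecMul_one]
  exact (Complex.ofReal_inj.mp h).symm

lemma Fsite_c (huu : star u * u = 1) (i0 : Fin D) (ψ : Fin D → ℂ)
    (hcol : ∀ a, u a i0 = ψ a) (i : Fin n) (v : (Fin n → Fin D) → ℂ) :
    Fsite ψ i v = ∑ y, (if y i = i0 then (1:ℝ) else 0)
      * Complex.normSq ((star (Tmat u) *ᵥ v) y) := by
  set c : (Fin n → Fin D) → ℂ := star (Tmat u (n := n)) *ᵥ v with hc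
  have h : ((Fsite ψ i v : ℝ) : ℂ)
      = ((∑ y, (if y i = i0 then (1:ℝ) else 0) * Complex.normSq (c y) : ℝ) : ℂ) := by
    rw [Fsite_quadform, Amat_conj huu i0 ψ hcol i]
    rw [Matrix.mul_assoc, ← Matrix.mulVec_mulVec, ← Matrix.mulVec_mulVec]
    rw [dotProduct_mulVec, show star v ᵥ* Tmat u = star c by
      rw [hc, Matrix.star_mulVec, Matrix.star_eq_conjTranspose,
        Matrix.conjTranspose_conjTranspose]]
    push_cast
    refine Finset.sum_congr rfl fun y _ => ?_
    rw [show (Dmat i0 i *ᵥ c) y = (if y i = i0 then (1:ℂ) else 0) * c y from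
      Matrix.mulVec_diagonal _ c y]
    by_cases hy : y i = i0
    · rw [if_pos hy, if_pos hy, Pi.star_apply, RCLike.star_def,
        Complex.normSq_eq_conj_mul_self]
      push_cast
      ring
    · rw [if_neg hy, if_neg hy]
      push_cast
      ring
  exact Complex.ofReal_inj.mp h

/-- The coefficient functional. -/
def cmap (u : Matrix (Fin D) (Fin D) ℂ) (w : (Fin n → Fin D) → ℂ) (y : Fin n → Fin D) : ℂ :=
  ∑ x, (∏ j, (starRingEnd ℂ) (u (x j) (y j))) * w x

lemma cmap_eq (w : (Fin n → Fin D) → ℂ) (y : Fin n → Fin D) :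
    (star (Tmat u) *ᵥ w) y = cmap u w y := by
  rw [Matrix.mulVec, dotProduct, cmap]
  refine Finset.sum_congr rfl fun x _ => ?_
  rw [Matrix.star_apply, RCLike.star_def, Tmat, Matrix.of_apply, map_prod]

lemma col_orth (huu : star u * u = 1) (b b' : Fin D) :
    ∑ a, (starRingEnd ℂ) (u a b) * u a b' = if b = b' then 1 else 0 := by
  have h2 : (star u * u) b b' = (1 : Matrix (Fin D) (Fin D) ℂ) b b' := by rw [huu]
  rw [Matrix.mul_apply] at h2
  simp only [Matrix.star_apply, RCLike.star_def] at h2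
  rw [h2, Matrix.one_apply]

lemma cmap_perm (π : Equiv.Perm (Fin n)) (w : (Fin n → Fin D) → ℂ) (y : Fin n → Fin D) :
    cmap u (permVec π w) y = cmap u w (fun j => y (π j)) := by
  rw [cmap, cmap]
  rw [← Equiv.sum_comp (Equiv.arrowCongr π (Equiv.refl (Fin D)))
    (fun x => (∏ j, (starRingEnd ℂ) (u (x j) (y j))) * permVec π w x)]
  refine Finset.sum_congr rfl fun x _ => ?_
  have h1 : permVec π w ((Equiv.arrowCongr π (Equiv.refl (Fin D))) x) = w x := by
    rw [permVec]
    congr 1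
    funext i
    simp [Equiv.arrowCongr]
  rw [h1]
  congr 1
  rw [← Equiv.prod_comp π
    (fun j => (starRingEnd ℂ) (u ((Equiv.arrowCongr π (Equiv.refl (Fin D)) x) j) (y j)))]
  refine Finset.prod_congr rfl fun j _ => ?_
  congr 2
  simp [Equiv.arrowCongr]

lemma count_perm (π : Equiv.Perm (Fin n)) (y : Fin n → Fin D) (i0 : Fin D) :
    (Finset.univ.filter fun j => y (π j) = i0).card
      = (Finset.univ.filter fun j => y j = i0).card := by
  refine Finset.card_bij' (fun j _ => π j) (fun j _ => π.symm j) ?_ ?_ ?_ ?_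
  · intro a ha
    simp only [Finset.mem_filter, Finset.mem_univ, true_and] at ha ⊢
    exact ha
  · intro b hb
    simp only [Finset.mem_filter, Finset.mem_univ, true_and] at hb ⊢
    simpa using hb
  · intro a _; simp
  · intro b _; simp

lemma cmap_base_eq_zero (huu : star u * u = 1) (i0 : Fin D) (ψ : Fin D → ℂ)
    (hcol : ∀ a, u a i0 = ψ a) {r : ℕ} (hrn : r ≤ n) (ω : (Fin r → Fin D) → ℂ)
    (y : Fin n → Fin D) (i₁ : Fin (n - r)) (hy : y (Fin.castLE (Nat.sub_le n r) i₁) ≠ i0) :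
    cmap u (baseVec n r hrn ψ ω) y = 0 := by
  set j₀ : Fin n := Fin.castLE (Nat.sub_le n r) i₁ with hj₀
  have hj₀lt : (j₀ : ℕ) < n - r := i₁.isLt
  have htail : ∀ j : Fin r, (⟨n - r + j.val, by have := j.isLt; omega⟩ : Fin n) ≠ j₀ := by
    intro j
    refine Fin.ne_of_val_ne ?_
    have : (j₀ : ℕ) < n - r := hj₀lt
    simp only []
    omega
  have hcast : ∀ i₂ : {i₂ : Fin (n - r) // i₂ ≠ i₁},
      Fin.castLE (Nat.sub_le n r) i₂.1 ≠ j₀ :=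
    fun i₂ hc => i₂.2 (Fin.castLE_injective _ hc)
  set R : ({j : Fin n // j ≠ j₀} → Fin D) → ℂ := fun f =>
    (∏ j : {j : Fin n // j ≠ j₀}, (starRingEnd ℂ) (u (f j) (y j.1))) *
      ((∏ i₂ : {i₂ : Fin (n - r) // i₂ ≠ i₁},
          ψ (f ⟨Fin.castLE (Nat.sub_le n r) i₂.1, hcast i₂⟩)) *
        ω (fun j => f ⟨⟨n - r + j.val, by have := j.isLt; omega⟩, htail j⟩)) with hR
  calc cmap u (baseVec n r hrn ψ ω) y
      = ∑ a, ∑ f : {j : Fin n // j ≠ j₀} → Fin D,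
          ((starRingEnd ℂ) (u a (y j₀)) * ψ a) * R f := by
        rw [cmap, ← Equiv.sum_comp (insEquiv j₀)
          (fun x => (∏ j, (starRingEnd ℂ) (u (x j) (y j))) * baseVec n r hrn ψ ω x),
          Fintype.sum_prod_type]
        refine Finset.sum_congr rfl fun a _ => Finset.sum_congr rfl fun f _ => ?_
        show (∏ j, (starRingEnd ℂ) (u (insF j₀ a f j) (y j)))
            * baseVec n r hrn ψ ω (insF j₀ a f) = _
        rw [prod_split j₀ (fun j => (starRingEnd ℂ) (u (insF j₀ a f j) (y j))), insF_apply_self]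
        rw [show (∏ j : {j : Fin n // j ≠ j₀}, (starRingEnd ℂ) (u (insF j₀ a f j.1) (y j.1)))
            = ∏ j : {j : Fin n // j ≠ j₀}, (starRingEnd ℂ) (u (f j) (y j.1)) from
          Finset.prod_congr rfl fun j _ => by rw [insF_apply_ne j₀ a f j.2]]
        rw [baseVec]
        rw [prod_split i₁ (fun i₂ => ψ (insF j₀ a f (Fin.castLE (Nat.sub_le n r) i₂)))]
        rw [show insF j₀ a f (Fin.castLE (Nat.sub_le n r) i₁) = a from by
          rw [← hj₀, insF_apply_self]]
        rw [show (∏ i₂ : {i₂ : Fin (n-r) // i₂ ≠ i₁},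
              ψ (insF j₀ a f (Fin.castLE (Nat.sub_le n r) i₂.1)))
            = ∏ i₂ : {i₂ : Fin (n-r) // i₂ ≠ i₁},
              ψ (f ⟨Fin.castLE (Nat.sub_le n r) i₂.1, hcast i₂⟩) from
          Finset.prod_congr rfl fun i₂ _ => by rw [insF_apply_ne j₀ a f (hcast i₂)]]
        rw [show (fun j : Fin r =>
              insF j₀ a f ⟨n - r + j.val, by have := j.isLt; omega⟩)
            = fun j : Fin r => f ⟨⟨n - r + j.val, by have := j.isLt; omega⟩, htail j⟩ from
          funext fun j => insF_apply_ne j₀ a f (htail j)]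
        rw [hR]
        ring
    _ = (∑ a, (starRingEnd ℂ) (u a (y j₀)) * ψ a)
        * ∑ f : {j : Fin n // j ≠ j₀} → Fin D, R f := (Finset.sum_mul_sum _ _ _ _).symm
    _ = 0 := by
        have hz : (∑ a, (starRingEnd ℂ) (u a (y j₀)) * ψ a) = 0 := by
          calc ∑ a, (starRingEnd ℂ) (u a (y j₀)) * ψ a
              = ∑ a, (starRingEnd ℂ) (u a (y j₀)) * u a i0 :=
                Finset.sum_congr rfl fun a _ => by rw [hcol]
            _ = 0 := by
                rw [col_orth huu]
                exact if_neg fun hc => hy hc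
        rw [hz, zero_mul]

lemma count_le_of_all {r : ℕ} (y : Fin n → Fin D) (i0 : Fin D)
    (h : ∀ i₁ : Fin (n - r), y (Fin.castLE (Nat.sub_le n r) i₁) = i0) :
    n - r ≤ (Finset.univ.filter fun j => y j = i0).card := by
  have hsub : (Finset.univ.image fun i₁ : Fin (n-r) => Fin.castLE (Nat.sub_le n r) i₁)
      ⊆ Finset.univ.filter fun j => y j = i0 := by
    intro j hj
    simp only [Finset.mem_image, Finset.mem_univ, true_and] at hj
    obtain ⟨i₁, rfl⟩ := hj
    simp [h i₁]
  have hcard := Finset.card_le_card hsub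
  rwa [Finset.card_image_of_injective _ (Fin.castLE_injective _), Finset.card_univ,
    Fintype.card_fin] at hcard

lemma span_vanish (huu : star u * u = 1) (i0 : Fin D) (ψ : Fin D → ℂ)
    (hcol : ∀ a, u a i0 = ψ a) {r : ℕ} (hrn : r ≤ n)
    (v : (Fin n → Fin D) → ℂ) (hv : v ∈ Submodule.span ℂ (Vset n r hrn ψ))
    (y : Fin n → Fin D) (hy : (Finset.univ.filter fun j => y j = i0).card < n - r) :
    (star (Tmat u) *ᵥ v) y = 0 := by
  set L : (Fin n → Fin D) → ((Fin n → Fin D) → ℂ) →ₗ[ℂ] ℂ := fun y =>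
    (LinearMap.proj y).comp (Matrix.mulVecLin (star (Tmat u))) with hL
  have hLapp : ∀ (y : Fin n → Fin D) (w : (Fin n → Fin D) → ℂ),
      L y w = (star (Tmat u) *ᵥ w) y := fun y w => rfl
  have hmem : v ∈ ⨅ y ∈ {y : Fin n → Fin D |
      (Finset.univ.filter fun j => y j = i0).card < n - r}, LinearMap.ker (L y) := by
    refine Submodule.span_le.mpr ?_ hv
    intro w hw
    simp only [SetLike.mem_coe, Submodule.mem_iInf]
    intro y' hy'
    rw [LinearMap.mem_ker, hLapp, cmap_eq]
    obtain ⟨π, ω, -, rfl⟩ := hw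
    rw [cmap_perm]
    have hex : ¬ ∀ i₁ : Fin (n - r), (fun j => y' (π j)) (Fin.castLE (Nat.sub_le n r) i₁) = i0 := by
      intro hall
      have h1 := count_le_of_all (fun j => y' (π j)) i0 hall
      rw [count_perm] at h1
      have h2 : (Finset.univ.filter fun j => y' j = i0).card < n - r := hy'
      omega
    push_neg at hex
    obtain ⟨i₁, hi₁⟩ := hex
    exact cmap_base_eq_zero huu i0 ψ hcol hrn ω _ i₁ hi₁
  simp only [Submodule.mem_iInf] at hmem
  have := LinearMap.mem_ker.mp (hmem y hy)
  rwa [hLapp] at this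

lemma exists_unitary {D : ℕ} (hD : 0 < D) (ψ : Fin D → ℂ)
    (hψ : (∑ x, Complex.normSq (ψ x)) = 1) :
    ∃ (i0 : Fin D) (u : Matrix (Fin D) (Fin D) ℂ),
      star u * u = 1 ∧ u * star u = 1 ∧ ∀ a, u a i0 = ψ a := by
  set i0 : Fin D := ⟨0, hD⟩ with hi0
  set ψ' : EuclideanSpace ℂ (Fin D) := WithLp.toLp 2 ψ with hψ'
  have hinner : (inner ℂ ψ' ψ' : ℂ) = 1 := by
    rw [PiLp.inner_apply]
    simp only [RCLike.inner_apply, hψ']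
    calc ∑ x, ψ x * (starRingEnd ℂ) (ψ x) = ∑ x, ((Complex.normSq (ψ x) : ℝ) : ℂ) := by
          refine Finset.sum_congr rfl fun x _ => ?_
          rw [Complex.normSq_eq_conj_mul_self, mul_comm]
      _ = 1 := by rw [← Complex.ofReal_sum, hψ]; norm_num
  have horth : Orthonormal ℂ (Set.restrict {i0} (fun _ : Fin D => ψ')) := by
    rw [orthonormal_iff_ite]
    intro i j
    have : i = j := Subtype.ext ((i.2 : (i : Fin D) = i0).trans (j.2 : (j : Fin D) = i0).symm)
    have hn : ‖ψ'‖ = 1 := by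
      have h2 := (inner_self_eq_norm_sq_to_K (𝕜 := ℂ) ψ').symm.trans hinner
      have h3 : ‖ψ'‖ ^ 2 = 1 := by
        have h4 : ((‖ψ'‖ ^ 2 : ℝ) : ℂ) = 1 := by rw [← RCLike.ofReal_pow] at h2; exact h2
        exact_mod_cast h4
      nlinarith [norm_nonneg ψ']
    simp [this, Set.restrict, hinner, hn]
  obtain ⟨b, hb⟩ := horth.exists_orthonormalBasis_extension_of_card_eq
    (by simp [finrank_euclideanSpace])
  have huu : star (Matrix.of fun a j => b j a) * (Matrix.of fun a j => b j a) = 1 := by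
    ext j j'
    have ho := (orthonormal_iff_ite.mp b.orthonormal) j j'
    rw [PiLp.inner_apply] at ho
    simp only [RCLike.inner_apply] at ho
    simpa [Matrix.mul_apply, Matrix.one_apply, mul_comm] using ho
  refine ⟨i0, Matrix.of fun a j => b j a, huu, mul_eq_one_comm.mp huu, ?_⟩
  intro a
  have h1 : b i0 = ψ' := hb i0 (by simp)
  show b i0 a = ψ' a
  exact congrFun (congrArg WithLp.ofLp h1) a


lemma span_bound {r : ℕ} (hrn : r ≤ n) (ψ : Fin D → ℂ)
    (hψ : (∑ x, Complex.normSq (ψ x)) = 1)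
    (v : (Fin n → Fin D) → ℂ) (hv : v ∈ Submodule.span ℂ (Vset n r hrn ψ)) :
    ((n - r : ℕ) : ℝ) * ∑ x, Complex.normSq (v x) ≤ ∑ i, Fsite ψ i v := by
  have hD : 0 < D := by
    rcases Nat.eq_zero_or_pos D with h | h
    · subst h
      simp at hψ
    · exact h
  obtain ⟨i0, u, huu, huu', hcol⟩ := exists_unitary hD ψ hψ
  calc ((n - r : ℕ) : ℝ) * ∑ x, Complex.normSq (v x)
      = ∑ y, ((n - r : ℕ) : ℝ) * Complex.normSq ((star (Tmat u) *ᵥ v) y) := by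
        rw [parseval huu v, Finset.mul_sum]
    _ ≤ ∑ y, (((Finset.univ.filter fun j => y j = i0).card : ℕ) : ℝ)
          * Complex.normSq ((star (Tmat u) *ᵥ v) y) := by
        refine Finset.sum_le_sum fun y _ => ?_
        by_cases hy : (Finset.univ.filter fun j => y j = i0).card < n - r
        · rw [span_vanish huu i0 ψ hcol hrn v hv y hy]
          simp
        · push_neg at hy
          have h0 := Complex.normSq_nonneg ((star (Tmat u) *ᵥ v) y)
          have hcast : ((n - r : ℕ) : ℝ)
              ≤ (((Finset.univ.filter fun j => y j = i0).card : ℕ) : ℝ) := by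
            exact_mod_cast hy
          exact mul_le_mul_of_nonneg_right hcast h0
    _ = ∑ i, Fsite ψ i v := by
        rw [show (∑ i, Fsite ψ i v) = ∑ i, ∑ y, (if y i = i0 then (1:ℝ) else 0)
            * Complex.normSq ((star (Tmat u) *ᵥ v) y) from
          Finset.sum_congr rfl fun i _ => Fsite_c huu i0 ψ hcol i v]
        rw [Finset.sum_comm]
        refine Finset.sum_congr rfl fun y _ => ?_
        rw [← Finset.sum_mul, Finset.sum_boole]


lemma siteMarginal_dot {N : Type*} [Fintype N] (ψ : Fin D → ℂ)
    (ρ : Matrix (Fin n → Fin D) (Fin n → Fin D) ℂ)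
    (w : N → (Fin n → Fin D) → ℂ)
    (hw : ∀ x y, ρ x y = ∑ k, w k x * (starRingEnd ℂ) (w k y)) (i : Fin n) :
    dotProduct (star ψ) ((siteMarginal ρ i).mulVec ψ)
      = ((∑ k, Fsite ψ i (w k) : ℝ) : ℂ) := by
  have key : ∀ (k : N) (f : {j : Fin n // j ≠ i} → Fin D),
      ((Complex.normSq (∑ b, (starRingEnd ℂ) (ψ b) * w k (insF i b f)) : ℝ) : ℂ)
        = ∑ a, ∑ b, (starRingEnd ℂ) (ψ a) * ψ b
            * (w k (insF i a f) * (starRingEnd ℂ) (w k (insF i b f))) := by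
    intro k f
    rw [← Complex.mul_conj, map_sum, Finset.sum_mul_sum]
    refine Finset.sum_congr rfl fun a _ => Finset.sum_congr rfl fun b _ => ?_
    simp only [_root_.map_mul, Complex.conj_conj]
    ring
  calc dotProduct (star ψ) ((siteMarginal ρ i).mulVec ψ)
      = ∑ a, ∑ b, ∑ f : {j : Fin n // j ≠ i} → Fin D, ∑ k,
          (starRingEnd ℂ) (ψ a) * ψ b
            * (w k (insF i a f) * (starRingEnd ℂ) (w k (insF i b f))) := by
        simp only [dotProduct, mulVec, siteMarginal, hw, Pi.star_apply, RCLike.star_def,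
          Finset.mul_sum, Finset.sum_mul]
        refine Finset.sum_congr rfl fun a _ => Finset.sum_congr rfl fun b _ =>
          Finset.sum_congr rfl fun f _ => Finset.sum_congr rfl fun k _ => ?_
        show (starRingEnd ℂ) (ψ a) * ((w k (insF i a f) * (starRingEnd ℂ) (w k (insF i b f))) * ψ b) = _
        ring
    _ = ∑ k, ∑ f : {j : Fin n // j ≠ i} → Fin D, ∑ a, ∑ b,
          (starRingEnd ℂ) (ψ a) * ψ b
            * (w k (insF i a f) * (starRingEnd ℂ) (w k (insF i b f))) := by
        conv_lhs => enter [2, a, 2, b]; rw [Finset.sum_comm]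
        conv_lhs => enter [2, a]; rw [Finset.sum_comm]
        rw [Finset.sum_comm]
        conv_lhs => enter [2, k, 2, a]; rw [Finset.sum_comm]
        conv_lhs => enter [2, k]; rw [Finset.sum_comm]
    _ = ((∑ k, Fsite ψ i (w k) : ℝ) : ℂ) := by
        push_cast [Fsite]
        refine Finset.sum_congr rfl fun k _ => Finset.sum_congr rfl fun f _ => ?_
        rw [key]


lemma exists_decomp {m : Type*} [Fintype m] [DecidableEq m] {ρ : Matrix m m ℂ}
    (hρ : ρ.PosSemidef) :
    ∃ w : m → m → ℂ, (∀ x y, ρ x y = ∑ k, w k x * (starRingEnd ℂ) (w k y)) ∧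
      ∀ k, w k = 0 ∨ w k ∈ LinearMap.range ρ.mulVecLin := by
  have hH : ρ.IsHermitian := hρ.1
  set U : Matrix m m ℂ := (hH.eigenvectorUnitary : Matrix m m ℂ) with hU
  set lam : m → ℝ := hH.eigenvalues with hlam
  have hspec : ρ = U * diagonal (RCLike.ofReal ∘ lam) * star U := hH.spectral_theorem
  have hUU : star U * U = 1 := by
    have := (Matrix.mem_unitaryGroup_iff).mp hH.eigenvectorUnitary.2
    calc star U * U = star U * (U * star U) * U := by rw [this, Matrix.mul_one]
    _ = (star U * U) * (star U * U) := by noncomm_ring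
    _ = 1 := by
        rcases mul_eq_one_comm.mp this with h
        rw [h, Matrix.one_mul]
  have hnn : ∀ k, 0 ≤ lam k := fun k => hρ.eigenvalues_nonneg k
  have hR : ∀ t : ℝ, (RCLike.ofReal t : ℂ) = (t : ℂ) := fun _ => rfl
  refine ⟨fun k x => (Real.sqrt (lam k) : ℂ) * U x k, ?_, ?_⟩
  · intro x y
    conv_lhs => rw [hspec]
    rw [Matrix.mul_apply]
    refine Finset.sum_congr rfl fun k _ => ?_
    rw [Matrix.mul_diagonal]
    simp only [star_apply, RCLike.star_def, Function.comp_apply, _root_.map_mul,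
      Complex.conj_ofReal, hR]
    have hss : ((Real.sqrt (lam k) : ℝ) : ℂ) * ((Real.sqrt (lam k) : ℝ) : ℂ) = ((lam k : ℝ) : ℂ) := by
      rw [← Complex.ofReal_mul, Real.mul_self_sqrt (hnn k)]
    rw [← hss]
    ring
  · intro k
    rcases eq_or_ne (lam k) 0 with h0 | h0
    · left
      funext x
      simp [h0]
    · right
      have hcol : ρ.mulVec (fun x => U x k) = fun x => (lam k : ℂ) * U x k := by
        have hmul : ρ * U = U * diagonal (RCLike.ofReal ∘ lam) := by
          rw [hspec, Matrix.mul_assoc, Matrix.mul_assoc]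
          rw [show (star U) * U = 1 from hUU, Matrix.mul_one]
        funext x
        have h2 := congrFun (congrFun hmul x) k
        rw [Matrix.mul_diagonal, Matrix.mul_apply] at h2
        simp only [Function.comp_apply, hR] at h2
        simpa [Matrix.mulVec, dotProduct, mul_comm] using h2
      refine ⟨((Real.sqrt (lam k) / lam k : ℝ) : ℂ) • (fun x => U x k), ?_⟩
      rw [LinearMap.map_smul]
      funext x
      simp only [Matrix.mulVecLin_apply, Pi.smul_apply, hcol, smul_eq_mul]
      rw [← mul_assoc, ← Complex.ofReal_mul, div_mul_cancel₀ _ h0]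


/-- If `ρₙ` is supported in `span V^n_r(K, |ψ⟩)`, then the sum of the
single-site fidelities satisfies `Σᵢ ⟨ψ|(ρₙ)ᵢ|ψ⟩ ≥ n − r`. -/
theorem sum_site_fidelity_ge_of_supp_in_Vspan
    {D : ℕ} {n r : ℕ} (hrn : r ≤ n)
    (ψ : Fin D → ℂ) (hψ : (∑ x, Complex.normSq (ψ x)) = 1)
    (ρn : Matrix (Fin n → Fin D) (Fin n → Fin D) ℂ) (hρn : IsState ρn)
    (hsupp : LinearMap.range (Matrix.mulVecLin ρn) ≤ Submodule.span ℂ (Vset n r hrn ψ)) :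
    (n : ℝ) - (r : ℝ)
      ≤ ∑ i : Fin n, (dotProduct (star ψ) ((siteMarginal ρn i).mulVec ψ)).re := by
  obtain ⟨w, hw, hrange⟩ := exists_decomp hρn.1
  have hwspan : ∀ k, w k ∈ Submodule.span ℂ (Vset n r hrn ψ) := by
    intro k
    rcases hrange k with h0 | hmem
    · rw [h0]; exact Submodule.zero_mem _
    · exact hsupp hmem
  have htr : ∑ k, ∑ x, Complex.normSq (w k x) = 1 := by
    have h1 : ((∑ k, ∑ x, Complex.normSq (w k x) : ℝ) : ℂ) = 1 := by
      calc ((∑ k, ∑ x, Complex.normSq (w k x) : ℝ) : ℂ)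
          = ∑ k, ∑ x, (w k x * (starRingEnd ℂ) (w k x)) := by
            push_cast
            exact Finset.sum_congr rfl fun k _ => Finset.sum_congr rfl fun x _ =>
              (Complex.mul_conj _).symm
        _ = ∑ x, ∑ k, (w k x * (starRingEnd ℂ) (w k x)) := Finset.sum_comm
        _ = ∑ x, ρn x x := Finset.sum_congr rfl fun x _ => (hw x x).symm
        _ = 1 := by simpa [Matrix.trace, Matrix.diag] using hρn.2
    exact_mod_cast h1
  calc (n:ℝ) - r = ((n - r : ℕ) : ℝ) * ∑ k, ∑ x, Complex.normSq (w k x) := by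
        rw [htr, mul_one, Nat.cast_sub hrn]
    _ = ∑ k, ((n - r : ℕ) : ℝ) * ∑ x, Complex.normSq (w k x) := Finset.mul_sum _ _ _
    _ ≤ ∑ k, ∑ i, Fsite ψ i (w k) :=
        Finset.sum_le_sum fun k _ => span_bound hrn ψ hψ (w k) (hwspan k)
    _ = ∑ i, ∑ k, Fsite ψ i (w k) := Finset.sum_comm
    _ = ∑ i : Fin n, (dotProduct (star ψ) ((siteMarginal ρn i).mulVec ψ)).re := by
        refine Finset.sum_congr rfl fun i _ => ?_
        rw [siteMarginal_dot ψ ρn w hw i, Complex.ofReal_re]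

end AlmostIID
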